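/- arXiv:1608.08733 — 3 statements merged into one kernel-verified Lean document; each statement's English description precedes it below -/
import Mathlib

section
/- If P and Q are smooth complex-valued functions on an open subset of a Riemannian manifold with Q nonvanishing, and both are eigenfunctions of the Laplace–Beltrami operator τ with the same eigenvalue λ (i.e. τ(P) = λP and τ(Q) = λQ), then the quotient f = P/Q satisfies Q³τ(f) = −2Q·κ(P,Q) + 2P·κ(Q,Q). -/
open scoped BigOperators

/-- Partial derivative in the `i`-th coordinate direction of a complex-valued
function on Euclidean space. -/
noncomputable def pd {n : ℕ} (i : Fin n) (f : EuclideanSpace ℝ (Fin n) → ℂ)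
    (x : EuclideanSpace ℝ (Fin n)) : ℂ :=
  deriv (fun t : ℝ => f (x + t • EuclideanSpace.single i (1 : ℝ))) 0

/-- The Laplace–Beltrami operator `τ` of the Riemannian manifold `ℝⁿ`. -/
noncomputable def lap {n : ℕ} (f : EuclideanSpace ℝ (Fin n) → ℂ)
    (x : EuclideanSpace ℝ (Fin n)) : ℂ :=
  ∑ i, pd i (pd i f) x

/-- The conformality operator `κ(f,h) = g(∇f,∇h)`. -/
noncomputable def kappa {n : ℕ} (f h : EuclideanSpace ℝ (Fin n) → ℂ)
    (x : EuclideanSpace ℝ (Fin n)) : ℂ :=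
  ∑ i, pd i f x * pd i h x


open Filter Topology in
lemma hasDerivAt_line {E F : Type*} [NormedAddCommGroup E] [NormedSpace ℝ E]
    [NormedAddCommGroup F] [NormedSpace ℝ F]
    {f : E → F} {y : E} (hf : DifferentiableAt ℝ f y) (v : E) :
    HasDerivAt (fun t : ℝ => f (y + t • v)) (fderiv ℝ f y v) 0 := by
  have hline : HasDerivAt (fun t : ℝ => y + t • v) v 0 := by
    simpa using ((hasDerivAt_id (0:ℝ)).smul_const v).const_add y
  have h : HasFDerivAt f (fderiv ℝ f y) (y + (0:ℝ) • v) := by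
    simpa using hf.hasFDerivAt
  simpa [Function.comp_def] using h.comp_hasDerivAt (0:ℝ) hline

lemma pd_eq_fderiv {n : ℕ} (i : Fin n) (f : EuclideanSpace ℝ (Fin n) → ℂ)
    (x : EuclideanSpace ℝ (Fin n)) (hf : DifferentiableAt ℝ f x) :
    pd i f x = fderiv ℝ f x (EuclideanSpace.single i (1:ℝ)) :=
  (hasDerivAt_line hf _).deriv

open Filter Topology in
lemma pd_congr {n : ℕ} (i : Fin n) {f g : EuclideanSpace ℝ (Fin n) → ℂ}
    {x : EuclideanSpace ℝ (Fin n)} (h : f =ᶠ[𝓝 x] g) : pd i f x = pd i g x := by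
  unfold pd
  apply Filter.EventuallyEq.deriv_eq
  have hc : Continuous (fun t : ℝ => x + t • EuclideanSpace.single i (1:ℝ)) := by
    continuity
  have ht : Filter.Tendsto (fun t : ℝ => x + t • EuclideanSpace.single i (1:ℝ)) (𝓝 0) (𝓝 x) := by
    simpa using hc.tendsto 0
  exact ht.eventually h

open Filter Topology in
/-- if `τ(P) = λP` and `τ(Q) = λQ` on an open set where `Q` does
not vanish, then `f = P/Q` satisfies `Q³ τ(f) = −2Q κ(P,Q) + 2P κ(Q,Q)`. -/
theorem stmt_3 {n : ℕ} (P Q : EuclideanSpace ℝ (Fin n) → ℂ) (lam : ℂ)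
    (s : Set (EuclideanSpace ℝ (Fin n))) (hs : IsOpen s)
    (hP : ContDiffOn ℝ 2 P s) (hQsmooth : ContDiffOn ℝ 2 Q s)
    (hQ : ∀ x ∈ s, Q x ≠ 0)
    (hPeig : ∀ x ∈ s, lap P x = lam * P x)
    (hQeig : ∀ x ∈ s, lap Q x = lam * Q x) :
    ∀ x ∈ s, (Q x) ^ 3 * lap (fun y => P y / Q y) x
      = -2 * Q x * kappa P Q x + 2 * P x * kappa Q Q x := by
  intro x hx
  have hsx : s ∈ 𝓝 x := hs.mem_nhds hx
  set p := P x with hp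
  set q := Q x with hqdef
  have hq : q ≠ 0 := hQ x hx
  set u : Fin n → EuclideanSpace ℝ (Fin n) := fun i => EuclideanSpace.single i (1:ℝ) with hu
  have hPd : ∀ y ∈ s, DifferentiableAt ℝ P y := fun y hy =>
    (hP.contDiffAt (hs.mem_nhds hy)).differentiableAt (by norm_num)
  have hQd : ∀ y ∈ s, DifferentiableAt ℝ Q y := fun y hy =>
    (hQsmooth.contDiffAt (hs.mem_nhds hy)).differentiableAt (by norm_num)
  have hfd : ∀ y ∈ s, DifferentiableAt ℝ (fun z => P z / Q z) y := by
    intro y hy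
    have h1 := (hPd y hy).mul ((hQd y hy).inv (hQ y hy))
    simpa [div_eq_mul_inv, Pi.mul_def, Pi.inv_def] using h1
  have hAd : ∀ i, DifferentiableAt ℝ (fun y => fderiv ℝ P y (u i)) x := by
    intro i
    have h1 : ContDiffAt ℝ 1 (fderiv ℝ P) x :=
      (hP.contDiffAt hsx).fderiv_right (m := 1) (by norm_num)
    exact (h1.differentiableAt one_ne_zero).clm_apply (differentiableAt_const _)
  have hBd : ∀ i, DifferentiableAt ℝ (fun y => fderiv ℝ Q y (u i)) x := by
    intro i
    have h1 : ContDiffAt ℝ 1 (fderiv ℝ Q) x :=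
      (hQsmooth.contDiffAt hsx).fderiv_right (m := 1) (by norm_num)
    exact (h1.differentiableAt one_ne_zero).clm_apply (differentiableAt_const _)
  set a : Fin n → ℂ := fun i => fderiv ℝ P x (u i) with ha
  set b : Fin n → ℂ := fun i => fderiv ℝ Q x (u i) with hb
  set a' : Fin n → ℂ := fun i => fderiv ℝ (fun y => fderiv ℝ P y (u i)) x (u i) with ha'
  set b' : Fin n → ℂ := fun i => fderiv ℝ (fun y => fderiv ℝ Q y (u i)) x (u i) with hb'
  -- second derivatives of P and Q
  have hPP : ∀ i, pd i (pd i P) x = a' i := by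
    intro i
    have h1 : pd i P =ᶠ[𝓝 x] fun y => fderiv ℝ P y (u i) :=
      Filter.eventually_of_mem hsx (fun y hy => pd_eq_fderiv i P y (hPd y hy))
    rw [pd_congr i h1, pd_eq_fderiv i _ x (hAd i)]
  have hQQ : ∀ i, pd i (pd i Q) x = b' i := by
    intro i
    have h1 : pd i Q =ᶠ[𝓝 x] fun y => fderiv ℝ Q y (u i) :=
      Filter.eventually_of_mem hsx (fun y hy => pd_eq_fderiv i Q y (hQd y hy))
    rw [pd_congr i h1, pd_eq_fderiv i _ x (hBd i)]
  have hSa : ∑ i, a' i = lam * p := by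
    rw [← hPeig x hx]; unfold lap
    exact (Finset.sum_congr rfl fun i _ => (hPP i)).symm
  have hSb : ∑ i, b' i = lam * q := by
    rw [← hQeig x hx]; unfold lap
    exact (Finset.sum_congr rfl fun i _ => (hQQ i)).symm
  have hab : ∑ i, a i * b i = kappa P Q x := by
    unfold kappa
    exact (Finset.sum_congr rfl fun i _ => by
      rw [pd_eq_fderiv i P x (hPd x hx), pd_eq_fderiv i Q x (hQd x hx)]).symm
  have hbb : ∑ i, b i * b i = kappa Q Q x := by
    unfold kappa
    exact (Finset.sum_congr rfl fun i _ => by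
      rw [pd_eq_fderiv i Q x (hQd x hx)]).symm
  -- first derivative of the quotient, on s
  have hpdf : ∀ i, ∀ y ∈ s, pd i (fun z => P z / Q z) y =
      (fderiv ℝ P y (u i) * Q y - P y * fderiv ℝ Q y (u i)) / (Q y * Q y) := by
    intro i y hy
    have hP' := hasDerivAt_line (hPd y hy) (u i)
    have hQ' := hasDerivAt_line (hQd y hy) (u i)
    have hdiv := hP'.div hQ' (by simpa using hQ y hy)
    have := hdiv.deriv
    simp only [zero_smul, add_zero] at this
    simpa [pd, pow_two, Pi.div_def] using this
  -- key formula for the second derivative of the quotient at x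
  have key : ∀ i, pd i (pd i (fun z => P z / Q z)) x =
      ((a' i * q - p * b' i) * q ^ 2 - (a i * q - p * b i) * (2 * q * b i)) / (q ^ 2) ^ 2 := by
    intro i
    have h1 : pd i (fun z => P z / Q z) =ᶠ[𝓝 x]
        fun y => (fderiv ℝ P y (u i) * Q y - P y * fderiv ℝ Q y (u i)) / (Q y * Q y) :=
      Filter.eventually_of_mem hsx (fun y hy => hpdf i y hy)
    rw [pd_congr i h1]
    have hA := hasDerivAt_line (hAd i) (u i)
    have hB := hasDerivAt_line (hBd i) (u i)
    have hPγ := hasDerivAt_line (hPd x hx) (u i)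
    have hQγ := hasDerivAt_line (hQd x hx) (u i)
    have hnum := (hA.mul hQγ).sub (hPγ.mul hB)
    have hden := hQγ.mul hQγ
    have hdiv := hnum.div hden (by
      show Q (x + (0:ℝ) • u i) * Q (x + (0:ℝ) • u i) ≠ 0
      simpa using mul_ne_zero hq hq)
    have hder := hdiv.deriv
    simp only [zero_smul, add_zero, Pi.mul_def, Pi.sub_def, Pi.div_def] at hder
    rw [pd]
    rw [show (fun t : ℝ => (fun y => (fderiv ℝ P y (u i) * Q y - P y * fderiv ℝ Q y (u i)) / (Q y * Q y))
        (x + t • EuclideanSpace.single i (1:ℝ))) =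
        (fun t : ℝ => (fderiv ℝ P (x + t • u i) (u i) * Q (x + t • u i)
          - P (x + t • u i) * fderiv ℝ Q (x + t • u i) (u i)) / (Q (x + t • u i) * Q (x + t • u i))) from rfl]
    rw [hder]
    simp only [ha, hb, ha', hb', hp, hqdef]
    ring
  -- assemble
  have hlap : lap (fun y => P y / Q y) x =
      (∑ i, ((a' i * q - p * b' i) * q ^ 2 - (a i * q - p * b i) * (2 * q * b i))) / (q ^ 2) ^ 2 := by
    unfold lap
    rw [Finset.sum_congr rfl fun i _ => key i, Finset.sum_div]
  have hNum : (∑ i, ((a' i * q - p * b' i) * q ^ 2 - (a i * q - p * b i) * (2 * q * b i)))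
      = q ^ 3 * (lam * p) - p * q ^ 2 * (lam * q) - 2 * q ^ 2 * kappa P Q x
        + 2 * p * q * kappa Q Q x := by
    rw [← hSa, ← hSb, ← hab, ← hbb]
    rw [Finset.mul_sum, Finset.mul_sum, Finset.mul_sum, Finset.mul_sum]
    rw [← Finset.sum_sub_distrib, ← Finset.sum_sub_distrib, ← Finset.sum_add_distrib]
    exact Finset.sum_congr rfl fun i _ => by ring
  rw [hlap, hNum]
  field_simp
  ring
end

section
/- Let z_{jα} : U(n) → ℂ denote the matrix coefficient functions z ↦ z_{jα} of the standard representation. With respect to the left-invariant metric on U(n) induced by ⟨Z,W⟩ = Re tr(ZW*), the Laplace–Beltrami operator τ and conformality operator κ satisfy τ(z_{jα}) = −n·z_{jα} and κ(z_{jα}, z_{kβ}) = −z_{kα}·z_{jβ}. -/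
open Matrix
open scoped BigOperators

variable {n : ℕ}

/-- The derivative of `f` at `p` along the left-invariant vector field determined by
`Z ∈ 𝔤𝔩(n,ℂ)`:  `Z(f)(p) = d/ds f(p·exp(sZ))|_{s=0}`. -/
noncomputable def lieD (Z : Matrix (Fin n) (Fin n) ℂ)
    (f : Matrix (Fin n) (Fin n) ℂ → ℂ) (p : Matrix (Fin n) (Fin n) ℂ) : ℂ :=
  deriv (fun s : ℝ => f (p * NormedSpace.exp (s • Z))) 0

/-- The second derivative `Z²(f)(p) = d²/ds² f(p·exp(sZ))|_{s=0}`. -/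
noncomputable def lieD2 (Z : Matrix (Fin n) (Fin n) ℂ)
    (f : Matrix (Fin n) (Fin n) ℂ → ℂ) (p : Matrix (Fin n) (Fin n) ℂ) : ℂ :=
  iteratedDeriv 2 (fun s : ℝ => f (p * NormedSpace.exp (s • Z))) 0

/-- The contribution `Z²(f) − [Z,Zᵗ]_𝔤(f)` of a basis vector `Z` to the tension field.
(For each element of the canonical basis of `𝔲(n)` below, `[Z,Zᵗ] = 0`, so the bracket
term is its own orthogonal projection onto `𝔲(n)`.) -/
noncomputable def tensTerm (Z : Matrix (Fin n) (Fin n) ℂ)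
    (f : Matrix (Fin n) (Fin n) ℂ → ℂ) (p : Matrix (Fin n) (Fin n) ℂ) : ℂ :=
  lieD2 Z f p - lieD (Z * Zᵀ - Zᵀ * Z) f p

/-- `Y_{rs} = (E_{rs} − E_{sr})/√2`. -/
noncomputable def Ybas (r s : Fin n) : Matrix (Fin n) (Fin n) ℂ :=
  ((Real.sqrt 2)⁻¹ : ℝ) • (Matrix.single r s (1 : ℂ) - Matrix.single s r (1 : ℂ))

/-- `iX_{rs} = i(E_{rs} + E_{sr})/√2`. -/
noncomputable def iXbas (r s : Fin n) : Matrix (Fin n) (Fin n) ℂ :=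
  ((Real.sqrt 2)⁻¹ : ℝ) •
    (Complex.I • (Matrix.single r s (1 : ℂ) + Matrix.single s r (1 : ℂ)))

/-- `iD_t = iE_{tt}`. -/
noncomputable def iDbas (t : Fin n) : Matrix (Fin n) (Fin n) ℂ :=
  Complex.I • Matrix.single t t (1 : ℂ)

/-- The Laplace–Beltrami operator `τ(f) = Σ_{Z∈ℬ} (Z²(f) − [Z,Zᵗ]_𝔤(f))` of `U(n)`
with the left-invariant metric induced by `⟨Z,W⟩ = Re tr(ZW*)`, with respect to the
canonical orthonormal basis `ℬ = {Y_{rs}, iX_{rs} : r<s} ∪ {iD_t}` of `𝔲(n)`. -/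
noncomputable def tension (f : Matrix (Fin n) (Fin n) ℂ → ℂ)
    (p : Matrix (Fin n) (Fin n) ℂ) : ℂ :=
  (∑ r, ∑ s, if r < s then tensTerm (Ybas r s) f p + tensTerm (iXbas r s) f p else 0)
    + ∑ t, tensTerm (iDbas t) f p

/-- The conformality operator `κ(f,h) = Σ_{Z∈ℬ} Z(f)Z(h)` on `U(n)`. -/
noncomputable def conf (f h : Matrix (Fin n) (Fin n) ℂ → ℂ)
    (p : Matrix (Fin n) (Fin n) ℂ) : ℂ :=
  (∑ r, ∑ s, if r < s then lieD (Ybas r s) f p * lieD (Ybas r s) h p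
      + lieD (iXbas r s) f p * lieD (iXbas r s) h p else 0)
    + ∑ t, lieD (iDbas t) f p * lieD (iDbas t) h p

/-! auxiliary lemmas -/

lemma hasDerivAt_gen (Z p Q : Matrix (Fin n) (Fin n) ℂ) (j α : Fin n) (t : ℝ) :
    HasDerivAt (fun s : ℝ => (p * NormedSpace.exp (s • Z) * Q) j α)
      ((p * NormedSpace.exp (t • Z) * Z * Q) j α) t := by
  letI : SeminormedRing (Matrix (Fin n) (Fin n) ℂ) := Matrix.linftyOpSemiNormedRing
  letI : NormedRing (Matrix (Fin n) (Fin n) ℂ) := Matrix.linftyOpNormedRing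
  letI : NormedAlgebra ℝ (Matrix (Fin n) (Fin n) ℂ) := Matrix.linftyOpNormedAlgebra
  have h1 := hasDerivAt_exp_smul_const (𝕂 := ℝ) Z t
  let L : Matrix (Fin n) (Fin n) ℂ →ₗ[ℝ] ℂ :=
    { toFun := fun M => (p * M * Q) j α
      map_add' := by intro M N; simp [Matrix.mul_add, Matrix.add_mul]
      map_smul' := by intro r M; simp [Matrix.mul_smul, Matrix.smul_mul] }
  have h2 := (L.toContinuousLinearMap.hasFDerivAt).comp_hasDerivAt t h1
  have h3 : (p * NormedSpace.exp (t • Z) * Z * Q) j α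
      = L.toContinuousLinearMap (NormedSpace.exp (t • Z) * Z) := by
    show _ = (p * (NormedSpace.exp (t • Z) * Z) * Q) j α
    simp only [Matrix.mul_assoc]
  rw [h3]
  exact h2

lemma lieD_coord (Z p : Matrix (Fin n) (Fin n) ℂ) (j α : Fin n) :
    lieD Z (fun z => z j α) p = (p * Z) j α := by
  have h := hasDerivAt_gen Z p (1 : Matrix (Fin n) (Fin n) ℂ) j α 0
  simp only [zero_smul, NormedSpace.exp_zero, mul_one] at h
  simpa [lieD] using h.deriv

lemma lieD2_coord (Z p : Matrix (Fin n) (Fin n) ℂ) (j α : Fin n) :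
    lieD2 Z (fun z => z j α) p = (p * (Z * Z)) j α := by
  have hd : deriv (fun s : ℝ => (p * NormedSpace.exp (s • Z)) j α)
      = fun t : ℝ => (p * NormedSpace.exp (t • Z) * Z) j α := by
    funext t
    have h := hasDerivAt_gen Z p (1 : Matrix (Fin n) (Fin n) ℂ) j α t
    simp only [mul_one] at h
    exact h.deriv
  have h2 := hasDerivAt_gen Z p Z j α 0
  simp only [zero_smul, NormedSpace.exp_zero, mul_one] at h2
  calc lieD2 Z (fun z => z j α) p
      = deriv (deriv (fun s : ℝ => (p * NormedSpace.exp (s • Z)) j α)) 0 := by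
        simp [lieD2, iteratedDeriv_succ, iteratedDeriv_zero]
    _ = (p * Z * Z) j α := by rw [hd]; exact h2.deriv
    _ = (p * (Z * Z)) j α := by rw [mul_assoc]

lemma mul_E_apply (p : Matrix (Fin n) (Fin n) ℂ) (a b j α : Fin n) :
    (p * Matrix.single a b (1:ℂ)) j α = if b = α then p j a else 0 := by
  by_cases h : b = α
  · subst h; simp
  · have h' : α ≠ b := fun hh => h hh.symm
    simp [h, h']

lemma u_sq : (((Real.sqrt 2)⁻¹ : ℝ) : ℂ) * (((Real.sqrt 2)⁻¹ : ℝ) : ℂ) = 2⁻¹ := by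
  rw [← Complex.ofReal_mul, ← mul_inv, Real.mul_self_sqrt (by norm_num)]
  norm_num

lemma key_alg (A B C D : ℂ) :
    (((Real.sqrt 2)⁻¹ : ℝ) : ℂ) * (A - B) * ((((Real.sqrt 2)⁻¹ : ℝ) : ℂ) * (C - D))
      + (((Real.sqrt 2)⁻¹ : ℝ) : ℂ) * Complex.I * (A + B)
        * ((((Real.sqrt 2)⁻¹ : ℝ) : ℂ) * Complex.I * (C + D))
      = -(A * D + B * C) := by
  have hu := u_sq
  have hI := Complex.I_mul_I
  linear_combination ((A - B) * (C - D) + Complex.I * Complex.I * (A + B) * (C + D)) * hu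
    + ((A + B) * (C + D) / 2) * hI

lemma mulY (p : Matrix (Fin n) (Fin n) ℂ) (r s j α : Fin n) :
    (p * Ybas r s) j α
      = (((Real.sqrt 2)⁻¹ : ℝ) : ℂ)
        * ((if s = α then p j r else 0) - (if r = α then p j s else 0)) := by
  rw [Ybas, Matrix.mul_smul, Matrix.smul_apply, Matrix.mul_sub, Matrix.sub_apply,
    mul_E_apply, mul_E_apply]
  simp [Complex.real_smul]

lemma mulX (p : Matrix (Fin n) (Fin n) ℂ) (r s j α : Fin n) :
    (p * iXbas r s) j α
      = (((Real.sqrt 2)⁻¹ : ℝ) : ℂ) * Complex.I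
        * ((if s = α then p j r else 0) + (if r = α then p j s else 0)) := by
  rw [iXbas, Matrix.mul_smul, Matrix.smul_apply, Matrix.mul_smul, Matrix.smul_apply,
    Matrix.mul_add, Matrix.add_apply, mul_E_apply, mul_E_apply]
  simp [Complex.real_smul]
  ring

lemma mulD (p : Matrix (Fin n) (Fin n) ℂ) (t j α : Fin n) :
    (p * iDbas t) j α = Complex.I * (if t = α then p j t else 0) := by
  rw [iDbas, Matrix.mul_smul, Matrix.smul_apply, mul_E_apply]
  simp

lemma E_transpose (a b : Fin n) :
    (Matrix.single a b (1:ℂ))ᵀ = Matrix.single b a (1:ℂ) := by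
  ext i l
  simp [Matrix.transpose_apply, Matrix.single, and_comm]

lemma Ybas_transpose (r s : Fin n) : (Ybas r s)ᵀ = -Ybas r s := by
  simp only [Ybas, Matrix.transpose_smul, Matrix.transpose_sub, E_transpose]
  module

lemma iXbas_transpose (r s : Fin n) : (iXbas r s)ᵀ = iXbas r s := by
  simp only [iXbas, Matrix.transpose_smul, Matrix.transpose_add, E_transpose]
  module

lemma iDbas_transpose (t : Fin n) : (iDbas t)ᵀ = iDbas t := by
  rw [iDbas, Matrix.transpose_smul, E_transpose]

lemma half_half : ((Real.sqrt 2)⁻¹ * (Real.sqrt 2)⁻¹ : ℝ) = 2⁻¹ := by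
  rw [← mul_inv, Real.mul_self_sqrt (by norm_num)]

lemma sq_sum {r s : Fin n} (hrs : r ≠ s) :
    Ybas r s * Ybas r s + iXbas r s * iXbas r s
      = -(Matrix.single r r (1:ℂ) + Matrix.single s s (1:ℂ)) := by
  have h1 : Matrix.single r s (1:ℂ) * Matrix.single r s (1:ℂ) = 0 :=
    Matrix.single_mul_single_of_ne (c := (1:ℂ)) (i := r) (j := s) (k := r) (h := Ne.symm hrs) (d := (1:ℂ))
  have h2 : Matrix.single s r (1:ℂ) * Matrix.single s r (1:ℂ) = 0 :=
    Matrix.single_mul_single_of_ne (c := (1:ℂ)) (i := s) (j := r) (k := s) (h := hrs) (d := (1:ℂ))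
  have h3 : Matrix.single r s (1:ℂ) * Matrix.single s r (1:ℂ)
      = Matrix.single r r (1:ℂ) := by
    rw [Matrix.single_mul_single_same]; norm_num
  have h4 : Matrix.single s r (1:ℂ) * Matrix.single r s (1:ℂ)
      = Matrix.single s s (1:ℂ) := by
    rw [Matrix.single_mul_single_same]; norm_num
  rw [Ybas, iXbas, smul_mul_smul_comm, smul_mul_smul_comm, half_half,
    smul_mul_smul_comm, Complex.I_mul_I, sub_mul, mul_sub, mul_sub, add_mul, mul_add, mul_add,
    h1, h2, h3, h4]
  module

lemma iD_sq (t : Fin n) :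
    iDbas t * iDbas t = -(Matrix.single t t (1:ℂ)) := by
  rw [iDbas, smul_mul_smul_comm, Complex.I_mul_I, Matrix.single_mul_single_same]
  norm_num

lemma mySumCollapse (v : Fin n → Fin n → ℂ) (a b : Fin n) :
    (∑ r, ∑ s, if r < s then (if r = a then if s = b then v r s else 0 else 0) else 0)
      = if a < b then v a b else 0 := by
  have h1 : ∀ r s : Fin n,
      (if r < s then (if r = a then if s = b then v r s else 0 else 0) else 0)
        = if s = b then (if r = a then (if r < s then v r s else 0) else 0) else 0 := by
    intro r s; split_ifs <;> rfl
  simp_rw [h1, Finset.sum_ite_eq' Finset.univ, Finset.mem_univ, if_true]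
  rw [Finset.sum_ite_eq' Finset.univ, if_pos (Finset.mem_univ a)]

lemma mySumCollapse1 (v : Fin n → ℂ) (a : Fin n) :
    (∑ t, if t = a then v t else 0) = v a := by
  rw [Finset.sum_ite_eq' Finset.univ, if_pos (Finset.mem_univ a)]

lemma myCountSum (x : ℂ) (a : Fin n) :
    (∑ r : Fin n, ∑ s : Fin n,
        if r < s then ((if r = a then x else 0) + (if s = a then x else 0)) else 0)
      = (n - 1 : ℕ) * x := by
  have h1 : ∀ r s : Fin n,
      (if r < s then ((if r = a then x else 0) + (if s = a then x else 0)) else 0)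
        = (if r = a then (if r < s then x else 0) else 0)
          + (if s = a then (if r < s then x else 0) else 0) := by
    intro r s; split_ifs <;> simp
  simp_rw [h1, Finset.sum_add_distrib]
  rw [Finset.sum_comm (f := fun r s => if r = a then (if r < s then x else 0) else 0)]
  simp_rw [Finset.sum_ite_eq' Finset.univ, Finset.mem_univ, if_true]
  rw [← Finset.sum_filter, ← Finset.sum_filter, Finset.sum_const, Finset.sum_const]
  rw [← add_smul]
  have hcard : (Finset.univ.filter fun s : Fin n => a < s).card
      + (Finset.univ.filter fun r : Fin n => r < a).card = n - 1 := by
    rw [← Finset.card_union_of_disjoint]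
    · have : (Finset.univ.filter fun s : Fin n => a < s)
          ∪ (Finset.univ.filter fun r : Fin n => r < a)
          = Finset.univ.filter fun x : Fin n => x ≠ a := by
        rw [← Finset.filter_or]
        apply Finset.filter_congr
        intro x _
        simp [← lt_or_lt_iff_ne, or_comm]
      rw [this, Finset.filter_ne', Finset.card_erase_of_mem (Finset.mem_univ a),
        Finset.card_univ, Fintype.card_fin]
    · rw [Finset.disjoint_filter]
      intro x _ h1 h2
      exact absurd (h1.trans h2) (lt_irrefl a)
  rw [hcard, nsmul_eq_mul]

lemma tensTerm_eq (Z p : Matrix (Fin n) (Fin n) ℂ) (j α : Fin n) (hZ : Z * Zᵀ = Zᵀ * Z) :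
    tensTerm Z (fun z => z j α) p = (p * (Z * Z)) j α := by
  rw [tensTerm, lieD2_coord, lieD_coord, hZ, sub_self, Matrix.mul_zero, Matrix.zero_apply,
    sub_zero]

lemma tens_pair (p : Matrix (Fin n) (Fin n) ℂ) (j α r s : Fin n) (hrs : r ≠ s) :
    tensTerm (Ybas r s) (fun z => z j α) p + tensTerm (iXbas r s) (fun z => z j α) p
      = -((if r = α then p j α else 0) + (if s = α then p j α else 0)) := by
  rw [tensTerm_eq _ _ _ _ (by rw [Ybas_transpose]; simp [neg_mul, mul_neg]),
    tensTerm_eq _ _ _ _ (by rw [iXbas_transpose]),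
    ← Matrix.add_apply, ← Matrix.mul_add, sq_sum hrs, Matrix.mul_neg, Matrix.neg_apply,
    Matrix.mul_add, Matrix.add_apply, mul_E_apply, mul_E_apply]
  by_cases h1 : r = α <;> by_cases h2 : s = α <;> simp [h1, h2]

lemma tens_D (p : Matrix (Fin n) (Fin n) ℂ) (j α t : Fin n) :
    tensTerm (iDbas t) (fun z => z j α) p = -(if t = α then p j α else 0) := by
  rw [tensTerm_eq _ _ _ _ (by rw [iDbas_transpose]), iD_sq, Matrix.mul_neg, Matrix.neg_apply,
    mul_E_apply]
  by_cases h : t = α <;> simp [h]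

lemma conf_pair (p : Matrix (Fin n) (Fin n) ℂ) (j α k β r s : Fin n) :
    lieD (Ybas r s) (fun z => z j α) p * lieD (Ybas r s) (fun z => z k β) p
      + lieD (iXbas r s) (fun z => z j α) p * lieD (iXbas r s) (fun z => z k β) p
      = -((if r = β then if s = α then p j r * p k s else 0 else 0)
          + (if r = α then if s = β then p j s * p k r else 0 else 0)) := by
  rw [lieD_coord, lieD_coord, lieD_coord, lieD_coord, mulY, mulY, mulX, mulX, key_alg]
  by_cases h1 : s = α <;> by_cases h2 : r = α <;> by_cases h3 : s = β <;> by_cases h4 : r = β <;>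
    simp [h1, h2, h3, h4, mul_comm, eq_comm]

lemma conf_D (p : Matrix (Fin n) (Fin n) ℂ) (j α k β t : Fin n) :
    lieD (iDbas t) (fun z => z j α) p * lieD (iDbas t) (fun z => z k β) p
      = -(if t = α then if t = β then p j t * p k t else 0 else 0) := by
  rw [lieD_coord, lieD_coord, mulD, mulD]
  by_cases h1 : t = α
  · subst h1
    by_cases h2 : t = β
    · subst h2
      simp only [eq_self_iff_true, if_true]
      linear_combination (p j t * p k t) * Complex.I_mul_I
    · simp [h2]
  · simp [h1]

/-- the matrix coefficients `z_{jα}` of the standard representation of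
`U(n)` satisfy `τ(z_{jα}) = −n·z_{jα}` and `κ(z_{jα}, z_{kβ}) = −z_{kα}z_{jβ}`. -/
theorem stmt_13 (j α k β : Fin n) (p : Matrix (Fin n) (Fin n) ℂ)
    (hp : p ∈ Matrix.unitaryGroup (Fin n) ℂ) :
    tension (fun z => z j α) p = -(n : ℂ) * p j α ∧
    conf (fun z => z j α) (fun z => z k β) p = -(p k α * p j β) := by
  have hn : 1 ≤ n := j.pos
  have hneg : ∀ (c : Prop) [Decidable c] (x : ℂ), (if c then -x else 0) = -(if c then x else 0) := by
    intro c _ x; split_ifs <;> simp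
  constructor
  · rw [tension]
    have h1 : ∀ r s : Fin n,
        (if r < s then tensTerm (Ybas r s) (fun z => z j α) p
            + tensTerm (iXbas r s) (fun z => z j α) p else 0)
          = -(if r < s then ((if r = α then p j α else 0) + (if s = α then p j α else 0))
              else 0) := by
      intro r s
      rw [← hneg]
      by_cases h : r < s
      · rw [if_pos h, if_pos h]
        exact tens_pair p j α r s (ne_of_lt h)
      · rw [if_neg h, if_neg h]
    simp_rw [h1, tens_D, Finset.sum_neg_distrib]
    rw [myCountSum, mySumCollapse1 (fun _ => p j α) α]
    rw [Nat.cast_sub hn]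
    push_cast
    ring
  · rw [conf]
    have h1 : ∀ r s : Fin n,
        (if r < s then lieD (Ybas r s) (fun z => z j α) p * lieD (Ybas r s) (fun z => z k β) p
            + lieD (iXbas r s) (fun z => z j α) p * lieD (iXbas r s) (fun z => z k β) p else 0)
          = -((if r < s then (if r = β then if s = α then p j r * p k s else 0 else 0) else 0)
              + (if r < s then (if r = α then if s = β then p j s * p k r else 0 else 0)
                else 0)) := by
      intro r s
      by_cases h : r < s
      · simp only [if_pos h]
        exact conf_pair p j α k β r s
      · simp only [if_neg h]
        simp
    simp_rw [h1, conf_D, Finset.sum_neg_distrib, Finset.sum_add_distrib]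
    rw [mySumCollapse (fun r s => p j r * p k s) β α,
      mySumCollapse (fun r s => p j s * p k r) α β,
      mySumCollapse1 (fun t => if t = β then p j t * p k t else 0) α]
    rcases lt_trichotomy α β with h | h | h
    · simp [h, asymm h, ne_of_lt h]
      ring
    · subst h
      simp [lt_irrefl]
      ring
    · simp [h, asymm h, (ne_of_lt h).symm]
      ring
end

section
/- Let f : U(n) → ℂ be the restriction of a holomorphic function F on an open subset of GL(n,ℂ). Then τ(f) = −Σ_{i,j,k,ℓ} (∂²f/∂z_{ij}∂z_{kℓ})·z_{kj}z_{iℓ} − n·Σ_{i,j} (∂f/∂z_{ij})·z_{ij}, where τ is the Laplace–Beltrami operator of U(n) with the left-invariant metric from ⟨Z,W⟩ = Re tr(ZW*). -/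
open Matrix
open scoped BigOperators

variable {n : ℕ}

section LinftyAux

attribute [local instance] Matrix.linftyOpNormedRing Matrix.linftyOpNormedAlgebra

open Filter in
lemma linfty_slope1 (Z p : Matrix (Fin n) (Fin n) ℂ) (t : ℝ) :
    Tendsto (slope (fun s : ℝ => p * NormedSpace.exp (s • Z)) t) (nhdsWithin t {t}ᶜ)
      (nhds (p * (NormedSpace.exp (t • Z) * Z))) :=
  hasDerivAt_iff_tendsto_slope.mp ((hasDerivAt_exp_smul_const (𝕂 := ℝ) Z t).const_mul p)

open Filter in
lemma linfty_slope2 (Z p : Matrix (Fin n) (Fin n) ℂ) :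
    Tendsto (slope (fun s : ℝ => p * (NormedSpace.exp (s • Z) * Z)) 0) (nhdsWithin 0 {0}ᶜ)
      (nhds (p * (Z * Z))) := by
  refine hasDerivAt_iff_tendsto_slope.mp ?_
  have h := ((hasDerivAt_exp_smul_const (𝕂 := ℝ) Z 0).mul_const Z).const_mul p
  exact h.congr_deriv (by simp [mul_assoc])

end LinftyAux

section

attribute [local instance] Matrix.normedAddCommGroup Matrix.normedSpace

/-- The complex partial derivative `∂F/∂z_{ij}`. -/
noncomputable def cpd (i j : Fin n) (F : Matrix (Fin n) (Fin n) ℂ → ℂ)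
    (z : Matrix (Fin n) (Fin n) ℂ) : ℂ :=
  fderiv ℂ F z (Matrix.single i j (1 : ℂ))

end

noncomputable instance matNACG : NormedAddCommGroup (Matrix (Fin n) (Fin n) ℂ) :=
  inferInstanceAs (NormedAddCommGroup (Fin n → Fin n → ℂ))

noncomputable instance matNS : NormedSpace ℂ (Matrix (Fin n) (Fin n) ℂ) :=
  inferInstanceAs (NormedSpace ℂ (Fin n → Fin n → ℂ))

/-! ### Auxiliary development -/



namespace Stmt14Aux

open Filter Metric

lemma key1 (Z p : Matrix (Fin n) (Fin n) ℂ) (t : ℝ) :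
    HasDerivAt (fun s : ℝ => p * NormedSpace.exp (s • Z))
      (p * (NormedSpace.exp (t • Z) * Z)) t :=
  hasDerivAt_iff_tendsto_slope.mpr (linfty_slope1 Z p t)

lemma key2 (Z p : Matrix (Fin n) (Fin n) ℂ) :
    HasDerivAt (fun s : ℝ => p * (NormedSpace.exp (s • Z) * Z)) (p * (Z * Z)) 0 :=
  hasDerivAt_iff_tendsto_slope.mpr (linfty_slope2 Z p)

/-- The coordinate functional `X ↦ X i j` as a continuous linear map. -/
noncomputable def ecoord (i j : Fin n) : Matrix (Fin n) (Fin n) ℂ →L[ℂ] ℂ :=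
  LinearMap.toContinuousLinearMap
    { toFun := fun X : Matrix (Fin n) (Fin n) ℂ => X i j
      map_add' := fun _ _ => rfl
      map_smul' := fun _ _ => rfl }

@[simp] lemma ecoord_apply (i j : Fin n) (X : Matrix (Fin n) (Fin n) ℂ) :
    ecoord i j X = X i j := rfl

lemma clm_decomp (L : Matrix (Fin n) (Fin n) ℂ →L[ℂ] ℂ) :
    L = ∑ i, ∑ j, L (Matrix.single i j 1) • ecoord i j := by
  ext X
  have hX : X = ∑ i, ∑ j, X i j • Matrix.single i j (1 : ℂ) := by
    conv_lhs => rw [Matrix.matrix_eq_sum_single X]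
    refine Finset.sum_congr rfl fun i _ => Finset.sum_congr rfl fun j _ => ?_
    rw [Matrix.smul_single, smul_eq_mul, mul_one]
  conv_lhs => rw [hX]
  simp only [map_sum, _root_.map_smul, ContinuousLinearMap.sum_apply,
    ContinuousLinearMap.smul_apply, ecoord_apply, smul_eq_mul]
  exact Finset.sum_congr rfl fun i _ => Finset.sum_congr rfl fun j _ => mul_comm _ _

lemma stdBasisMatrix_ne_zero (i j : Fin n) : Matrix.single i j (1 : ℂ) ≠ 0 := by
  intro h
  have := congrFun (congrFun h i) j
  simp [Matrix.single] at this

section SecondDeriv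

variable {F : Matrix (Fin n) (Fin n) ℂ → ℂ} {U : Set (Matrix (Fin n) (Fin n) ℂ)}
  (hU : IsOpen U) (hF : DifferentiableOn ℂ F U)
  {p : Matrix (Fin n) (Fin n) ℂ} (hpU : p ∈ U)

include hU hF in
lemma slice_hasDerivAt {w v : Matrix (Fin n) (Fin n) ℂ} (t : ℂ) (hw : w + t • v ∈ U) :
    HasDerivAt (fun t : ℂ => F (w + t • v)) (fderiv ℂ F (w + t • v) v) t := by
  have h1 : HasDerivAt (fun t : ℂ => w + t • v) v t := by
    simpa using ((hasDerivAt_id t).smul_const v).const_add w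
  exact (hF.differentiableAt (hU.mem_nhds hw)).hasFDerivAt.comp_hasDerivAt t h1

include hU hF hpU in
/-- Holomorphic implies the derivative is again differentiable (via the Cauchy integral
formula applied on complex lines, and differentiation under the integral sign). -/
lemma fderiv_differentiableAt : DifferentiableAt ℂ (fun z => fderiv ℂ F z) p := by
  obtain ⟨r, rpos, hrU⟩ : ∃ r > 0, closedBall p r ⊆ U :=
    (Metric.nhds_basis_closedBall.mem_iff).1 (hU.mem_nhds hpU)
  set ε : ℝ := r / 4 with hεdef
  have εpos : 0 < ε := by positivity
  have hsub : ∀ {w : Matrix (Fin n) (Fin n) ℂ}, dist w p ≤ 3 * ε → w ∈ U := by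
    intro w hw
    exact hrU (mem_closedBall.2 (hw.trans (by rw [hεdef]; linarith)))
  -- a bound for `F` on the closed ball of radius `3ε`
  obtain ⟨M₀, hM₀⟩ := (isCompact_closedBall p (3 * ε)).exists_bound_of_continuousOn
    (hF.continuousOn.mono fun x hx => hsub (mem_closedBall.1 hx))
  have hM₀0 : 0 ≤ M₀ :=
    le_trans (norm_nonneg (F p)) (hM₀ p (mem_closedBall_self (by positivity)))
  -- a bound for the derivative on the ball of radius `2ε`, via the Cauchy estimate
  have hGb : ∀ w : Matrix (Fin n) (Fin n) ℂ, dist w p ≤ 2 * ε → ‖fderiv ℂ F w‖ ≤ M₀ / ε := by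
    intro w hw
    refine ContinuousLinearMap.opNorm_le_bound _ (by positivity) fun v => ?_
    rcases eq_or_ne v 0 with rfl | hv
    · simp
    have hv0 : 0 < ‖v‖ := norm_pos_iff.2 hv
    set R : ℝ := ε / ‖v‖ with hRdef
    have hR : 0 < R := by positivity
    have hdist : ∀ t : ℂ, ‖t‖ ≤ R → dist (w + t • v) p ≤ 3 * ε := by
      intro t ht
      have h1 : dist (w + t • v) p ≤ dist w p + ‖t • v‖ := by
        rw [dist_eq_norm, dist_eq_norm, add_sub_right_comm]
        exact norm_add_le _ _
      have h2 : ‖t • v‖ ≤ ε := by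
        rw [norm_smul]
        calc ‖t‖ * ‖v‖ ≤ R * ‖v‖ := mul_le_mul_of_nonneg_right ht (norm_nonneg v)
        _ = ε := by rw [hRdef]; field_simp
      linarith
    have hmem : ∀ t : ℂ, ‖t‖ ≤ R → w + t • v ∈ U := fun t ht => hsub (hdist t ht)
    have hd : DiffContOnCl ℂ (fun t : ℂ => F (w + t • v)) (ball 0 R) := by
      apply DifferentiableOn.diffContOnCl
      rw [closure_ball (0 : ℂ) hR.ne']
      intro t ht
      have ht' : ‖t‖ ≤ R := by
        simpa [Complex.dist_eq] using mem_closedBall.1 ht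
      exact ((slice_hasDerivAt hU hF t (hmem t ht')).differentiableAt).differentiableWithinAt
    have hderiv0 : deriv (fun t : ℂ => F (w + t • v)) 0 = fderiv ℂ F w v := by
      have h0 : w + (0 : ℂ) • v ∈ U := hmem 0 (by simp [hR.le])
      have := (slice_hasDerivAt hU hF (0 : ℂ) h0).deriv
      simpa using this
    have hb := Complex.norm_deriv_le_of_forall_mem_sphere_norm_le hR hd (C := M₀) ?_
    · rw [hderiv0] at hb
      calc ‖fderiv ℂ F w v‖ ≤ M₀ / R := hb
      _ = M₀ / ε * ‖v‖ := by rw [hRdef]; field_simp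
    · intro t ht
      have ht' : ‖t‖ ≤ R := by
        have := mem_sphere_iff_norm.1 ht
        simp only [sub_zero] at this
        simp [← this]
      exact hM₀ _ (mem_closedBall.2 (hdist t ht'))
  -- differentiability of each directional derivative, by the Cauchy formula + differentiation
  -- under the integral sign
  have hdir : ∀ v : Matrix (Fin n) (Fin n) ℂ, v ≠ 0 →
      DifferentiableAt ℂ (fun z => fderiv ℂ F z v) p := by
    intro v hv
    have hv0 : 0 < ‖v‖ := norm_pos_iff.2 hv
    set R : ℝ := ε / ‖v‖ with hRdef
    have hR : 0 < R := by positivity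
    have habs : ∀ θ : ℝ, ‖circleMap 0 R θ‖ = R := by
      intro θ; rw [norm_circleMap_zero, abs_of_pos hR]
    have hcne : ∀ θ : ℝ, circleMap 0 R θ ≠ 0 := by
      intro θ h
      have h2 := habs θ
      rw [h] at h2
      simp at h2
      exact hR.ne' h2.symm
    have hdist : ∀ (z : Matrix (Fin n) (Fin n) ℂ) (θ : ℝ), dist z p < ε →
        dist (z + circleMap 0 R θ • v) p ≤ 2 * ε := by
      intro z θ hz
      have h1 : dist (z + circleMap 0 R θ • v) p ≤ dist z p + ‖circleMap 0 R θ • v‖ := by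
        rw [dist_eq_norm, dist_eq_norm, add_sub_right_comm]
        exact norm_add_le _ _
      have h2 : ‖circleMap 0 R θ • v‖ = ε := by
        rw [norm_smul]
        show ‖circleMap 0 R θ‖ * ‖v‖ = ε
        rw [habs, hRdef]
        field_simp
      linarith
    have hmemU : ∀ (z : Matrix (Fin n) (Fin n) ℂ) (θ : ℝ), dist z p < ε →
        z + circleMap 0 R θ • v ∈ U := by
      intro z θ hz
      exact hsub ((hdist z θ hz).trans (by linarith))
    -- the integrand and its `z`-derivative
    set Ψ : Matrix (Fin n) (Fin n) ℂ → ℝ → ℂ := fun z θ =>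
      deriv (circleMap 0 R) θ • ((circleMap 0 R θ) ^ (-2 : ℤ) • F (z + circleMap 0 R θ • v))
      with hΨdef
    set Ψ' : Matrix (Fin n) (Fin n) ℂ → ℝ → Matrix (Fin n) (Fin n) ℂ →L[ℂ] ℂ := fun z θ =>
      deriv (circleMap 0 R) θ •
        ((circleMap 0 R θ) ^ (-2 : ℤ) • fderiv ℂ F (z + circleMap 0 R θ • v)) with hΨ'def
    have hinner : ∀ (z : Matrix (Fin n) (Fin n) ℂ) (θ : ℝ), dist z p < ε →
        HasFDerivAt (fun x : Matrix (Fin n) (Fin n) ℂ => F (x + circleMap 0 R θ • v))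
          (fderiv ℂ F (z + circleMap 0 R θ • v)) z := by
      intro z θ hz
      have h1 := ((hF.differentiableAt (hU.mem_nhds (hmemU z θ hz))).hasFDerivAt).comp z
        ((hasFDerivAt_id z).add_const (circleMap 0 R θ • v))
      simpa [Function.comp_def] using h1
    have hΨdiff : ∀ (z : Matrix (Fin n) (Fin n) ℂ) (θ : ℝ), dist z p < ε →
        HasFDerivAt (fun x => Ψ x θ) (Ψ' z θ) z := by
      intro z θ hz
      exact ((hinner z θ hz).const_smul ((circleMap 0 R θ) ^ (-2 : ℤ))).const_smul
        (deriv (circleMap 0 R) θ)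
    have hderivmap : deriv (circleMap 0 R) = fun θ => circleMap 0 R θ * Complex.I :=
      funext fun θ => deriv_circleMap 0 R θ
    have hcont : ∀ z : Matrix (Fin n) (Fin n) ℂ, dist z p < ε → Continuous fun θ => Ψ z θ := by
      intro z hz
      apply Continuous.fun_smul
      · rw [hderivmap]
        exact (continuous_circleMap 0 R).mul continuous_const
      apply Continuous.fun_smul
      · exact (continuous_circleMap 0 R).zpow₀ _ (fun θ => Or.inl (hcne θ))
      · refine hF.continuousOn.comp_continuous ?_ ?_
        · exact continuous_const.add ((continuous_circleMap 0 R).smul continuous_const)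
        · exact fun θ => hmemU z θ hz
    have hbound : ∀ (z : Matrix (Fin n) (Fin n) ℂ) (θ : ℝ), dist z p < ε →
        ‖Ψ' z θ‖ ≤ R * (R ^ (-2 : ℤ) * (M₀ / ε)) := by
      intro z θ hz
      have h1 : ‖deriv (circleMap 0 R) θ‖ = R := by
        rw [deriv_circleMap, norm_mul, habs,
          Complex.norm_I, mul_one]
      have h2 : ‖(circleMap 0 R θ) ^ (-2 : ℤ)‖ = R ^ (-2 : ℤ) := by
        rw [norm_zpow, habs]
      have h3 : ‖fderiv ℂ F (z + circleMap 0 R θ • v)‖ ≤ M₀ / ε := hGb _ (hdist z θ hz)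
      have h4 : (0 : ℝ) ≤ R ^ (-2 : ℤ) := by positivity
      simp only [hΨ'def]
      calc ‖deriv (circleMap 0 R) θ •
            ((circleMap 0 R θ) ^ (-2 : ℤ) • fderiv ℂ F (z + circleMap 0 R θ • v))‖
          ≤ ‖deriv (circleMap 0 R) θ‖ *
            ‖(circleMap 0 R θ) ^ (-2 : ℤ) • fderiv ℂ F (z + circleMap 0 R θ • v)‖ :=
            ContinuousLinearMap.opNorm_smul_le _ _
        _ ≤ ‖deriv (circleMap 0 R) θ‖ * (‖(circleMap 0 R θ) ^ (-2 : ℤ)‖ *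
            ‖fderiv ℂ F (z + circleMap 0 R θ • v)‖) :=
            mul_le_mul_of_nonneg_left (ContinuousLinearMap.opNorm_smul_le _ _) (norm_nonneg _)
        _ ≤ R * (R ^ (-2 : ℤ) * (M₀ / ε)) := by
            rw [h1, h2]
            exact mul_le_mul_of_nonneg_left (mul_le_mul_of_nonneg_left h3 h4) hR.le
    -- differentiation under the integral sign
    have hkey : HasFDerivAt (fun z => ∫ θ in (0 : ℝ)..(2 * Real.pi), Ψ z θ)
        (∫ θ in (0 : ℝ)..(2 * Real.pi), Ψ' p θ) p := by
      apply intervalIntegral.hasFDerivAt_integral_of_dominated_of_fderiv_le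
        (bound := fun _ => R * (R ^ (-2 : ℤ) * (M₀ / ε))) (Metric.ball_mem_nhds p εpos)
      · filter_upwards [Metric.ball_mem_nhds p εpos] with x hx
        exact ((hcont x (mem_ball.1 hx)).aestronglyMeasurable)
      · exact (hcont p (by simpa using εpos)).intervalIntegrable _ _
      · -- measurability of `θ ↦ Ψ' p θ`
        apply MeasureTheory.AEStronglyMeasurable.fun_smul
        · rw [hderivmap]
          exact ((continuous_circleMap 0 R).mul continuous_const).aestronglyMeasurable
        apply MeasureTheory.AEStronglyMeasurable.fun_smul
        · exact ((continuous_circleMap 0 R).zpow₀ _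
            (fun θ => Or.inl (hcne θ))).aestronglyMeasurable
        · borelize (Matrix (Fin n) (Fin n) ℂ)
          apply Measurable.aestronglyMeasurable
          exact (measurable_fderiv ℂ F).comp
            (measurable_const.add ((continuous_circleMap 0 R).measurable.smul measurable_const))
      · filter_upwards with θ _ x hx
        exact hbound x θ (mem_ball.1 hx)
      · exact intervalIntegrable_const
      · filter_upwards with θ _ x hx
        exact hΨdiff x θ (mem_ball.1 hx)
    -- the Cauchy-formula representation
    have hrep : ∀ z : Matrix (Fin n) (Fin n) ℂ, dist z p < ε →
        fderiv ℂ F z v =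
          (2 * Real.pi * Complex.I : ℂ)⁻¹ • ∫ θ in (0 : ℝ)..(2 * Real.pi), Ψ z θ := by
      intro z hz
      have hdist2 : ∀ t : ℂ, ‖t‖ ≤ R → z + t • v ∈ U := by
        intro t ht
        apply hsub
        have h1 : dist (z + t • v) p ≤ dist z p + ‖t • v‖ := by
          rw [dist_eq_norm, dist_eq_norm, add_sub_right_comm]
          exact norm_add_le _ _
        have h2 : ‖t • v‖ ≤ ε := by
          rw [norm_smul]
          calc ‖t‖ * ‖v‖ ≤ R * ‖v‖ := mul_le_mul_of_nonneg_right ht (norm_nonneg v)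
          _ = ε := by rw [hRdef]; field_simp
        linarith
      have hd : DiffContOnCl ℂ (fun t : ℂ => F (z + t • v)) (ball 0 R) := by
        apply DifferentiableOn.diffContOnCl
        rw [closure_ball (0 : ℂ) hR.ne']
        intro t ht
        have ht' : ‖t‖ ≤ R := by
          simpa [Complex.dist_eq] using mem_closedBall.1 ht
        exact ((slice_hasDerivAt hU hF t (hdist2 t ht')).differentiableAt).differentiableWithinAt
      have hderiv0 : deriv (fun t : ℂ => F (z + t • v)) 0 = fderiv ℂ F z v := by
        have h0 : z + (0 : ℂ) • v ∈ U := hdist2 0 (by simp [hR.le])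
        have := (slice_hasDerivAt hU hF (0 : ℂ) h0).deriv
        simpa using this
      have hc : deriv (fun t : ℂ => F (z + t • v)) 0 = (2 * Real.pi * Complex.I : ℂ)⁻¹ •
          ∮ t in C(0, R), (1 / (t - 0) ^ 2) • F (z + t • v) := by
        rw [hd.deriv_eq_smul_circleIntegral hR, smul_smul,
          inv_mul_cancel₀ (by simp [Real.pi_ne_zero, Complex.I_ne_zero]), one_smul]
      rw [hderiv0] at hc
      rw [hc]
      congr 1
      rw [circleIntegral]
      refine intervalIntegral.integral_congr fun θ _ => ?_
      rw [hΨdef]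
      simp
    -- conclude
    have hΦdiff : DifferentiableAt ℂ
        (fun z => (2 * Real.pi * Complex.I : ℂ)⁻¹ •
          ∫ θ in (0 : ℝ)..(2 * Real.pi), Ψ z θ) p :=
      (hkey.differentiableAt.fun_const_smul _)
    refine hΦdiff.congr_of_eventuallyEq ?_
    filter_upwards [Metric.ball_mem_nhds p εpos] with z hz
    exact hrep z (mem_ball.1 hz)
  -- assemble differentiability of `fderiv ℂ F` from the directional derivatives
  have hsum : DifferentiableAt ℂ
      (fun z => ∑ i, ∑ j, fderiv ℂ F z (Matrix.single i j 1) • ecoord i j) p := by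
    apply DifferentiableAt.fun_sum
    intro i _
    apply DifferentiableAt.fun_sum
    intro j _
    exact (hdir _ (stdBasisMatrix_ne_zero i j)).smul_const (ecoord i j)
  refine hsum.congr_of_eventuallyEq ?_
  filter_upwards with z
  exact clm_decomp (fderiv ℂ F z)

end SecondDeriv

/-! ### Derivative formulas -/

section DerivFormulas

variable {F : Matrix (Fin n) (Fin n) ℂ → ℂ} {U : Set (Matrix (Fin n) (Fin n) ℂ)}
  (hU : IsOpen U) (hF : DifferentiableOn ℂ F U)
  {p : Matrix (Fin n) (Fin n) ℂ} (hpU : p ∈ U)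

include hU hF hpU in
lemma lieD_eq (W : Matrix (Fin n) (Fin n) ℂ) : lieD W F p = fderiv ℂ F p (p * W) := by
  have hc : HasDerivAt (fun s : ℝ => p * NormedSpace.exp (s • W)) (p * W) 0 := by
    simpa using key1 W p 0
  have hFp : HasFDerivAt F ((fderiv ℂ F p).restrictScalars ℝ)
      (p * NormedSpace.exp ((0 : ℝ) • W)) := by
    simp only [zero_smul, NormedSpace.exp_zero, mul_one]
    exact ((hF.differentiableAt (hU.mem_nhds hpU)).hasFDerivAt).restrictScalars ℝ
  exact (hFp.comp_hasDerivAt 0 hc).deriv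

include hU hF hpU in
lemma lieD2_eq (Z : Matrix (Fin n) (Fin n) ℂ) :
    lieD2 Z F p = fderiv ℂ (fun z => fderiv ℂ F z) p (p * Z) (p * Z)
      + fderiv ℂ F p (p * (Z * Z)) := by
  classical
  set G : Matrix (Fin n) (Fin n) ℂ → Matrix (Fin n) (Fin n) ℂ →L[ℂ] ℂ :=
    fun z => fderiv ℂ F z with hGdef
  have hH : HasFDerivAt G (fderiv ℂ G p) p :=
    (fderiv_differentiableAt hU hF hpU).hasFDerivAt
  set H : Matrix (Fin n) (Fin n) ℂ →L[ℂ] Matrix (Fin n) (Fin n) ℂ →L[ℂ] ℂ :=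
    fderiv ℂ G p with hHdef
  set c : ℝ → Matrix (Fin n) (Fin n) ℂ := fun s => p * NormedSpace.exp (s • Z) with hcdef
  have hc0 : c 0 = p := by simp [hcdef]
  have hcU : ∀ᶠ s : ℝ in nhds 0, c s ∈ U := by
    have hcont : ContinuousAt c 0 := (key1 Z p 0).continuousAt
    exact hcont.preimage_mem_nhds (by rw [hc0]; exact hU.mem_nhds hpU)
  set res : (Matrix (Fin n) (Fin n) ℂ →L[ℂ] ℂ) →L[ℝ] (Matrix (Fin n) (Fin n) ℂ →L[ℝ] ℂ) :=
    (ContinuousLinearMap.restrictScalarsIsometry ℂ (Matrix (Fin n) (Fin n) ℂ) ℂ ℝ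
      ℝ).toContinuousLinearMap with hresdef
  set h : ℝ → ℂ := fun s => (res (G (c s))) (p * (NormedSpace.exp (s • Z) * Z)) with hhdef
  -- the first derivative of `g` agrees with `h` near `0`
  have hev : deriv (fun s : ℝ => F (c s)) =ᶠ[nhds 0] h := by
    filter_upwards [hcU] with s hs
    have hFc : HasFDerivAt F ((G (c s)).restrictScalars ℝ) (c s) :=
      ((hF.differentiableAt (hU.mem_nhds hs)).hasFDerivAt).restrictScalars ℝ
    exact (hFc.comp_hasDerivAt s (key1 Z p s)).deriv
  -- derivative of `h` at `0`
  have hcd : HasDerivAt c (p * Z) 0 := by simpa using key1 Z p 0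
  have hGc : HasDerivAt (fun s => G (c s)) ((H.restrictScalars ℝ) (p * Z)) 0 := by
    have hH' : HasFDerivAt G (H.restrictScalars ℝ) (c 0) := by
      rw [hc0]; exact hH.restrictScalars ℝ
    exact hH'.comp_hasDerivAt 0 hcd
  have hu : HasDerivAt (fun s => res (G (c s))) (res ((H.restrictScalars ℝ) (p * Z))) 0 :=
    res.hasFDerivAt.comp_hasDerivAt 0 hGc
  have hv : HasDerivAt (fun s : ℝ => p * (NormedSpace.exp (s • Z) * Z)) (p * (Z * Z)) 0 :=
    key2 Z p
  have happ := hu.clm_apply hv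
  -- compute
  have hlie : lieD2 Z F p = deriv h 0 := by
    show iteratedDeriv 2 (fun s : ℝ => F (c s)) 0 = deriv h 0
    rw [show (2 : ℕ) = 1 + 1 from rfl, iteratedDeriv_succ, iteratedDeriv_one]
    exact hev.deriv_eq
  rw [hlie, happ.deriv]
  have h1 : (res ((H.restrictScalars ℝ) (p * Z)))
      (p * (NormedSpace.exp ((0 : ℝ) • Z) * Z)) = H (p * Z) (p * Z) := by
    simp only [zero_smul, NormedSpace.exp_zero, one_mul]
    rfl
  have h2 : (res (G (c 0))) (p * (Z * Z)) = fderiv ℂ F p (p * (Z * Z)) := by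
    rw [hc0]; rfl
  rw [h1, h2]

include hU hF hpU in
lemma cpd2_eq (i j k l : Fin n) :
    cpd k l (cpd i j F) p
      = fderiv ℂ (fun z => fderiv ℂ F z) p (Matrix.single k l 1)
          (Matrix.single i j 1) := by
  have hH : HasFDerivAt (fun z => fderiv ℂ F z) (fderiv ℂ (fun z => fderiv ℂ F z) p) p :=
    (fderiv_differentiableAt hU hF hpU).hasFDerivAt
  have happ := hH.clm_apply (hasFDerivAt_const (Matrix.single i j (1 : ℂ)) p)
  have hrfl : cpd k l (cpd i j F) p
      = fderiv ℂ (fun z => fderiv ℂ F z (Matrix.single i j 1)) p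
          (Matrix.single k l 1) := rfl
  rw [hrfl, happ.fderiv]
  simp

end DerivFormulas

/-! ### Summation lemmas -/

lemma pair_sum (f : Fin n → Fin n → ℂ) :
    ((∑ r, ∑ s, if r < s then f r s + f s r else 0) + ∑ t, f t t) = ∑ r, ∑ s, f r s := by
  classical
  have h3 : ∀ r s : Fin n, f r s = (if r < s then f r s else 0)
      + (if s < r then f r s else 0) + (if r = s then f r s else 0) := by
    intro r s
    rcases lt_trichotomy r s with h | h | h
    · simp [h, asymm h, h.ne]
    · simp [h, lt_irrefl]
    · simp [h, asymm h, h.ne']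
  have hsplit : ∑ r, ∑ s, f r s
      = ((∑ r, ∑ s, if r < s then f r s else 0) + ∑ r, ∑ s, if s < r then f r s else 0)
        + ∑ r, ∑ s, if r = s then f r s else 0 := by
    rw [← Finset.sum_add_distrib, ← Finset.sum_add_distrib]
    refine Finset.sum_congr rfl fun r _ => ?_
    rw [← Finset.sum_add_distrib, ← Finset.sum_add_distrib]
    exact Finset.sum_congr rfl fun s _ => h3 r s
  have hswap : (∑ r, ∑ s, if s < r then f r s else 0)
      = ∑ r, ∑ s, if r < s then f s r else 0 := Finset.sum_comm
  have hdiag : (∑ r, ∑ s, if r = s then f r s else 0) = ∑ t, f t t := by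
    refine Finset.sum_congr rfl fun r _ => ?_
    simp
  have hleft : (∑ r, ∑ s, if r < s then f r s + f s r else 0)
      = (∑ r, ∑ s, if r < s then f r s else 0) + ∑ r, ∑ s, if r < s then f s r else 0 := by
    rw [← Finset.sum_add_distrib]
    refine Finset.sum_congr rfl fun r _ => ?_
    rw [← Finset.sum_add_distrib]
    refine Finset.sum_congr rfl fun s _ => ?_
    split_ifs <;> simp
  rw [hsplit, hswap, hdiag, hleft]

lemma sum4_swap (g : Fin n → Fin n → Fin n → Fin n → ℂ) :
    (∑ r, ∑ s, ∑ k, ∑ i, g k r i s) = ∑ i, ∑ j, ∑ k, ∑ l, g k j i l := by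
  classical
  calc (∑ r, ∑ s, ∑ k, ∑ i, g k r i s)
      = ∑ r, ∑ s, ∑ i, ∑ k, g k r i s :=
        Finset.sum_congr rfl fun r _ => Finset.sum_congr rfl fun s _ => Finset.sum_comm
    _ = ∑ r, ∑ i, ∑ s, ∑ k, g k r i s :=
        Finset.sum_congr rfl fun r _ => Finset.sum_comm
    _ = ∑ i, ∑ r, ∑ s, ∑ k, g k r i s := Finset.sum_comm
    _ = ∑ i, ∑ r, ∑ k, ∑ s, g k r i s :=
        Finset.sum_congr rfl fun i _ => Finset.sum_congr rfl fun r _ => Finset.sum_comm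

end Stmt14Aux

open Stmt14Aux in
/-- if `f` is the restriction to `U(n)` of a holomorphic function `F`
on an open subset of `GL(n,ℂ)`, then at `p ∈ U(n)`
`τ(f) = −Σ_{i,j,k,ℓ} (∂²F/∂z_{ij}∂z_{kℓ}) z_{kj} z_{iℓ} − n Σ_{i,j} (∂F/∂z_{ij}) z_{ij}`. -/
theorem stmt_14 (F : Matrix (Fin n) (Fin n) ℂ → ℂ)
    (U : Set (Matrix (Fin n) (Fin n) ℂ)) (hU : IsOpen U)
    (hF : DifferentiableOn ℂ F U)
    (p : Matrix (Fin n) (Fin n) ℂ) (hpU : p ∈ U)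
    (hp : p ∈ Matrix.unitaryGroup (Fin n) ℂ) :
    tension F p
      = -(∑ i, ∑ j, ∑ k, ∑ l, cpd k l (cpd i j F) p * p k j * p i l)
        - (n : ℂ) * ∑ i, ∑ j, cpd i j F p * p i j := by
  classical
  set L : Matrix (Fin n) (Fin n) ℂ →L[ℂ] ℂ := fderiv ℂ F p with hLdef
  set H : Matrix (Fin n) (Fin n) ℂ →L[ℂ] Matrix (Fin n) (Fin n) ℂ →L[ℂ] ℂ :=
    fderiv ℂ (fun z => fderiv ℂ F z) p with hHdef
  set E : Fin n → Fin n → Matrix (Fin n) (Fin n) ℂ :=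
    fun i j => Matrix.single i j (1 : ℂ) with hEdef
  set C : Fin n → Fin n → Matrix (Fin n) (Fin n) ℂ := fun a b => p * E a b with hCdef
  -- expansion of the columns of `p`
  have hCsum : ∀ a b, C a b = ∑ k, p k a • E k b := by
    intro a b
    ext x y
    simp only [hCdef, hEdef]
    rw [Matrix.mul_apply]
    simp only [Matrix.sum_apply, Matrix.smul_apply, smul_eq_mul, Matrix.single,
      Matrix.of_apply, mul_ite, mul_one, mul_zero, ite_and]
    by_cases hb : b = y
    · subst hb
      simp [Finset.sum_ite_eq, Finset.sum_ite_eq']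
    · simp [hb]
  -- the second partial derivatives
  have hcpd2 : ∀ i j k l : Fin n, cpd k l (cpd i j F) p = H (E k l) (E i j) :=
    fun i j k l => cpd2_eq hU hF hpU i j k l
  have hcpd : ∀ i j : Fin n, cpd i j F p = L (E i j) := fun _ _ => rfl
  -- the linear functional `e`
  set e : Fin n → ℂ := fun t => -(L (C t t)) with hedef
  set f : Fin n → Fin n → ℂ := fun a b => -(H (C a b) (C b a)) + e a with hfdef
  -- vanishing of the bracket terms
  have hlieD0 : lieD 0 F p = 0 := by
    rw [lieD_eq hU hF hpU 0]
    simp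
  have htens : ∀ Z : Matrix (Fin n) (Fin n) ℂ,
      Z * Zᵀ - Zᵀ * Z = 0 → tensTerm Z F p = H (p * Z) (p * Z) + L (p * (Z * Z)) := by
    intro Z hZ
    rw [tensTerm, hZ, hlieD0, sub_zero, lieD2_eq hU hF hpU Z]
  have htr : ∀ i j : Fin n,
      (Matrix.single i j (1:ℂ))ᵀ = Matrix.single j i 1 := by
    intro i j
    ext a b
    simp [Matrix.single, Matrix.transpose_apply, and_comm]
  have hbrY : ∀ r s : Fin n, (Ybas r s) * (Ybas r s)ᵀ - (Ybas r s)ᵀ * (Ybas r s) = 0 := by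
    intro r s
    have ht : (Ybas r s)ᵀ = -(Ybas r s) := by
      rw [Ybas, Matrix.transpose_smul, Matrix.transpose_sub, htr, htr, ← smul_neg, neg_sub]
    rw [ht, Matrix.mul_neg, Matrix.neg_mul]
    abel
  have hbrX : ∀ r s : Fin n, (iXbas r s) * (iXbas r s)ᵀ - (iXbas r s)ᵀ * (iXbas r s) = 0 := by
    intro r s
    have ht : (iXbas r s)ᵀ = iXbas r s := by
      rw [iXbas, Matrix.transpose_smul, Matrix.transpose_smul, Matrix.transpose_add,
        htr, htr, add_comm]
    rw [ht, sub_self]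
  have hbrD : ∀ t : Fin n, (iDbas t) * (iDbas t)ᵀ - (iDbas t)ᵀ * (iDbas t) = 0 := by
    intro t
    have ht : (iDbas t)ᵀ = iDbas t := by
      rw [iDbas, Matrix.transpose_smul, htr]
    rw [ht, sub_self]
  -- scalar bookkeeping
  set κ : ℂ := (((Real.sqrt 2)⁻¹ : ℝ) : ℂ) with hκdef
  have hcast : ∀ X : Matrix (Fin n) (Fin n) ℂ, ((Real.sqrt 2)⁻¹ : ℝ) • X = κ • X := by
    intro X
    rw [hκdef, ← algebraMap_smul ℂ ((Real.sqrt 2)⁻¹ : ℝ) X, Complex.coe_algebraMap]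
  have hκ2 : κ * κ = (2⁻¹ : ℂ) := by
    have hsqrt : ((Real.sqrt 2)⁻¹ : ℝ) * (Real.sqrt 2)⁻¹ = 2⁻¹ := by
      rw [← mul_inv, Real.mul_self_sqrt (by norm_num : (0:ℝ) ≤ 2)]
    rw [hκdef, ← Complex.ofReal_mul, hsqrt, Complex.ofReal_inv]
    norm_num
  have hκI2 : (κ * Complex.I) * (κ * Complex.I) = -(2⁻¹ : ℂ) := by
    rw [mul_mul_mul_comm, hκ2, Complex.I_mul_I]
    ring
  -- bilinear-form manipulation lemmas
  have hq_smul : ∀ (a : ℂ) (X Y : Matrix (Fin n) (Fin n) ℂ),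
      H (a • X) (a • Y) = (a * a) • H X Y := by
    intro a X Y
    rw [_root_.map_smul, _root_.map_smul, ContinuousLinearMap.smul_apply, smul_smul]
  -- products of the basis matrices
  have hpY : ∀ r s : Fin n, p * Ybas r s = κ • (C r s - C s r) := by
    intro r s
    rw [Ybas, hcast, Matrix.mul_smul, Matrix.mul_sub]
  have hpX : ∀ r s : Fin n,
      p * iXbas r s = (κ * Complex.I) • (C r s + C s r) := by
    intro r s
    rw [iXbas, hcast, smul_smul, Matrix.mul_smul, Matrix.mul_add]
  have hpD : ∀ t : Fin n, p * iDbas t = Complex.I • C t t := by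
    intro t
    rw [iDbas, Matrix.mul_smul]
  have hYsq : ∀ r s : Fin n, r ≠ s →
      p * (Ybas r s * Ybas r s) = (2⁻¹ : ℂ) • (-(C r r) - C s s) := by
    intro r s hrs
    have hAA : (Matrix.single r s (1:ℂ) - Matrix.single s r 1)
        * (Matrix.single r s 1 - Matrix.single s r 1)
        = -(Matrix.single r r (1:ℂ)) - Matrix.single s s 1 := by
      rw [Matrix.sub_mul, Matrix.mul_sub, Matrix.mul_sub,
        Matrix.single_mul_single_of_ne (h := Ne.symm hrs),
        Matrix.single_mul_single_of_ne (h := hrs),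
        Matrix.single_mul_single_same, Matrix.single_mul_single_same, mul_one]
      abel
    rw [Ybas, hcast]
    simp only [Matrix.smul_mul, Matrix.mul_smul, smul_smul]
    rw [hκ2, hAA, Matrix.mul_sub, Matrix.mul_neg]
  have hXsq : ∀ r s : Fin n, r ≠ s →
      p * (iXbas r s * iXbas r s) = (-(2⁻¹ : ℂ)) • (C r r + C s s) := by
    intro r s hrs
    have hBB : (Matrix.single r s (1:ℂ) + Matrix.single s r 1)
        * (Matrix.single r s 1 + Matrix.single s r 1)
        = Matrix.single r r (1:ℂ) + Matrix.single s s 1 := by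
      rw [Matrix.add_mul, Matrix.mul_add, Matrix.mul_add,
        Matrix.single_mul_single_of_ne (h := Ne.symm hrs),
        Matrix.single_mul_single_of_ne (h := hrs),
        Matrix.single_mul_single_same, Matrix.single_mul_single_same, mul_one]
      abel
    rw [iXbas, hcast, smul_smul]
    simp only [Matrix.smul_mul, Matrix.mul_smul, smul_smul]
    rw [hBB, Matrix.mul_add]
    rw [show κ * Complex.I * (κ * Complex.I) = -(2⁻¹ : ℂ) from hκI2]
  have hDsq : ∀ t : Fin n, p * (iDbas t * iDbas t) = (-1 : ℂ) • C t t := by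
    intro t
    rw [iDbas]
    simp only [Matrix.smul_mul, Matrix.mul_smul, smul_smul]
    rw [Matrix.single_mul_single_same, mul_one, Complex.I_mul_I]
  -- the diagonal terms
  have hD : ∀ t : Fin n, tensTerm (iDbas t) F p = f t t := by
    intro t
    rw [htens (iDbas t) (hbrD t), hpD t, hq_smul, hDsq t, _root_.map_smul]
    rw [Complex.I_mul_I]
    simp only [hfdef, hedef, smul_eq_mul, neg_mul, one_mul, neg_smul, one_smul]
  -- the off-diagonal pairs
  have hYX : ∀ r s : Fin n, r < s →
      tensTerm (Ybas r s) F p + tensTerm (iXbas r s) F p = f r s + f s r := by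
    intro r s hrs
    have hne : r ≠ s := ne_of_lt hrs
    rw [htens (Ybas r s) (hbrY r s), htens (iXbas r s) (hbrX r s),
      hpY r s, hpX r s, hq_smul, hq_smul, hκ2, hκI2, hYsq r s hne, hXsq r s hne,
      _root_.map_smul, _root_.map_smul]
    simp only [map_sub, map_add, map_neg, ContinuousLinearMap.sub_apply,
      ContinuousLinearMap.add_apply, ContinuousLinearMap.neg_apply,
      hfdef, hedef, smul_eq_mul]
    ring
  -- put the sum together
  have htension : tension F p = (∑ r, ∑ s, f r s) := by
    rw [tension, ← pair_sum f]
    congr 1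
    · refine Finset.sum_congr rfl fun r _ => Finset.sum_congr rfl fun s _ => ?_
      split_ifs with hlt
      · exact hYX r s hlt
      · rfl
    · exact Finset.sum_congr rfl fun t _ => hD t
  -- the quadratic part
  have hHCC : ∀ r s : Fin n,
      H (C r s) (C s r) = ∑ k, ∑ i, p k r * p i s * H (E k s) (E i r) := by
    intro r s
    rw [hCsum r s, hCsum s r]
    simp only [map_sum, _root_.map_smul, ContinuousLinearMap.sum_apply,
      ContinuousLinearMap.smul_apply, smul_eq_mul, Finset.mul_sum]
    rw [Finset.sum_comm]
    exact Finset.sum_congr rfl fun k _ => Finset.sum_congr rfl fun i _ => by ring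
  have hquad : (∑ r, ∑ s, H (C r s) (C s r))
      = ∑ i, ∑ j, ∑ k, ∑ l, cpd k l (cpd i j F) p * p k j * p i l := by
    calc (∑ r, ∑ s, H (C r s) (C s r))
        = ∑ r, ∑ s, ∑ k, ∑ i, p k r * p i s * H (E k s) (E i r) :=
          Finset.sum_congr rfl fun r _ => Finset.sum_congr rfl fun s _ => hHCC r s
      _ = ∑ i, ∑ j, ∑ k, ∑ l, p k j * p i l * H (E k l) (E i j) :=
          sum4_swap (fun a b c d => p a b * p c d * H (E a d) (E c b))
      _ = ∑ i, ∑ j, ∑ k, ∑ l, cpd k l (cpd i j F) p * p k j * p i l := by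
          refine Finset.sum_congr rfl fun i _ => Finset.sum_congr rfl fun j _ =>
            Finset.sum_congr rfl fun k _ => Finset.sum_congr rfl fun l _ => ?_
          rw [hcpd2 i j k l]
          ring
  -- the linear part
  have hlin : (∑ r, L (C r r)) = ∑ i, ∑ j, cpd i j F p * p i j := by
    calc (∑ r, L (C r r))
        = ∑ r, ∑ k, p k r * L (E k r) := by
          refine Finset.sum_congr rfl fun r _ => ?_
          rw [hCsum r r, map_sum]
          exact Finset.sum_congr rfl fun k _ => by
            rw [_root_.map_smul, smul_eq_mul]
      _ = ∑ k, ∑ r, p k r * L (E k r) := Finset.sum_comm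
      _ = ∑ i, ∑ j, cpd i j F p * p i j := by
          refine Finset.sum_congr rfl fun i _ => Finset.sum_congr rfl fun j _ => ?_
          rw [hcpd i j]
          ring
  -- final assembly
  rw [htension]
  have hsplitf : (∑ r, ∑ s, f r s)
      = (∑ r, ∑ s, -(H (C r s) (C s r))) + ∑ r : Fin n, ∑ _s : Fin n, e r := by
    rw [← Finset.sum_add_distrib]
    refine Finset.sum_congr rfl fun r _ => ?_
    rw [← Finset.sum_add_distrib]
  have hsume : (∑ r : Fin n, ∑ _s : Fin n, e r) = -((n : ℂ) * ∑ r, L (C r r)) := by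
    have h1 : ∀ r : Fin n, (∑ _s : Fin n, e r) = (n : ℂ) * e r := by
      intro r
      rw [Finset.sum_const, Finset.card_univ, Fintype.card_fin, nsmul_eq_mul]
    rw [Finset.sum_congr rfl fun r _ => h1 r, ← Finset.mul_sum, hedef]
    simp only [Finset.sum_neg_distrib]
    ring
  rw [hsplitf, hsume]
  have hsumneg : (∑ r, ∑ s, -(H (C r s) (C s r))) = -(∑ r, ∑ s, H (C r s) (C s r)) := by
    simp [Finset.sum_neg_distrib]
  rw [hsumneg, hquad, hlin]
  ring
end
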